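/- arXiv:1207.2456 — 2 statements merged into one kernel-verified Lean document; each statement's English description precedes it below -/
import Mathlib

section
/- Consider AIHT applied to y = Mx + e where x is ℓ-cosparse, with constant step size μ satisfying 1/μ ≥ 1 + δ_{2ℓ-p}, where δ_{2ℓ-p} is the Ω-RIP constant of M and the projection uses a near-optimal cosupport selection with constant C_ℓ. Then at iteration t, ‖y - Mx̂^t‖₂² - ‖y - Mx̂^{t-1}‖₂² ≤ C_ℓ(‖y - Mx‖₂² - ‖y - Mx̂^{t-1}‖₂²) + C_ℓ(1/(μ(1-δ_{2ℓ-p})) - 1)‖M(x - x̂^{t-1})‖₂² + (C_ℓ - 1)μσ_M²‖y - Mx̂^{t-1}‖₂², where σ_M is the largest singular value of M. -/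
set_option maxHeartbeats 1000000


noncomputable section

abbrev Evec (d : ℕ) := EuclideanSpace ℝ (Fin d)

def nullSp {d p : ℕ} (Om : Evec d →L[ℝ] Evec p) (Λ : Finset (Fin p)) : Submodule ℝ (Evec d) where
  carrier := {x | ∀ i ∈ Λ, Om x i = 0}
  zero_mem' := by intro i _; simp
  add_mem' := by intro a b ha hb i hi; simp [ha i hi, hb i hi]
  smul_mem' := by intro c a ha i hi; simp [ha i hi]

def Qp {d p : ℕ} (Om : Evec d →L[ℝ] Evec p) (Λ : Finset (Fin p)) : Evec d →L[ℝ] Evec d :=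
  (nullSp Om Λ).subtypeL ∘L (nullSp Om Λ).orthogonalProjection

def Cosparse {d p : ℕ} (Om : Evec d →L[ℝ] Evec p) (ℓ : ℕ) (v : Evec d) : Prop :=
  ℓ ≤ {i : Fin p | Om v i = 0}.ncard

def ORIP {d m p : ℕ} (M : Evec d →L[ℝ] Evec m) (Om : Evec d →L[ℝ] Evec p) (ℓ : ℕ) (δ : ℝ) : Prop :=
  ∀ v : Evec d, Cosparse Om ℓ v →
    (1 - δ) * ‖v‖ ^ 2 ≤ ‖M v‖ ^ 2 ∧ ‖M v‖ ^ 2 ≤ (1 + δ) * ‖v‖ ^ 2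

lemma cosparse_sub {d p ℓ : ℕ} (Om : Evec d →L[ℝ] Evec p) {a b : Evec d}
    (ha : Cosparse Om ℓ a) (hb : Cosparse Om ℓ b) :
    Cosparse Om (2 * ℓ - p) (a - b) := by
  unfold Cosparse at *
  set A : Set (Fin p) := {i | Om a i = 0}
  set B : Set (Fin p) := {i | Om b i = 0}
  have hsub : A ∩ B ⊆ {i : Fin p | Om (a - b) i = 0} := by
    rintro i ⟨hiA, hiB⟩
    simp only [Set.mem_setOf_eq, map_sub] at *
    show Om a i - Om b i = 0
    rw [hiA, hiB, sub_zero]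
  have h1 : (A ∩ B).ncard ≤ {i : Fin p | Om (a - b) i = 0}.ncard :=
    Set.ncard_le_ncard hsub (Set.toFinite _)
  have h2 : (A ∪ B).ncard + (A ∩ B).ncard = A.ncard + B.ncard :=
    Set.ncard_union_add_ncard_inter A B (Set.toFinite _) (Set.toFinite _)
  have h3 : (A ∪ B).ncard ≤ p := by
    have := Set.ncard_le_ncard (Set.subset_univ (A ∪ B)) (Set.toFinite _)
    simpa [Set.ncard_univ] using this
  omega

open scoped RealInnerProductSpace
/-- Single-iteration bound for AIHT (Lemma 5.4): with a constant step size μ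
satisfying 1/μ ≥ 1 + δ_{2ℓ-p}, the objective decrease at iteration t is controlled. -/
theorem stmt7 {d m p ℓ : ℕ} (M : Evec d →L[ℝ] Evec m) (Om : Evec d →L[ℝ] Evec p)
    (x xprev xg xt : Evec d) (e y : Evec m) (S : Evec d → Finset (Fin p))
    (C δ μ : ℝ)
    (hy : y = M x + e)
    (hx : Cosparse Om ℓ x)
    (hxprev : Cosparse Om ℓ xprev)
    (hScard : ∀ z : Evec d, ℓ ≤ (S z).card)
    (hSnear : ∀ z v : Evec d, Cosparse Om ℓ v →
      ‖z - Qp Om (S z) z‖ ^ 2 ≤ C * ‖z - v‖ ^ 2)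
    (hC : 1 ≤ C)
    (hrip : ORIP M Om (2 * ℓ - p) δ)
    (hδ0 : 0 ≤ δ) (hδ1 : δ < 1)
    (hμ : 0 < μ) (hμδ : 1 + δ ≤ 1 / μ)
    (hxg : xg = xprev + μ • (ContinuousLinearMap.adjoint M) (y - M xprev))
    (hxt : xt = Qp Om (S xg) xg) :
    ‖y - M xt‖ ^ 2 - ‖y - M xprev‖ ^ 2 ≤
      C * (‖y - M x‖ ^ 2 - ‖y - M xprev‖ ^ 2)
      + C * (1 / (μ * (1 - δ)) - 1) * ‖M (x - xprev)‖ ^ 2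
      + (C - 1) * μ * ‖M‖ ^ 2 * ‖y - M xprev‖ ^ 2 := by
  have hμne : μ ≠ 0 := ne_of_gt hμ
  have h1δ : (0:ℝ) < 1 - δ := by linarith
  set r : Evec m := y - M xprev with hr
  set g : Evec d := (ContinuousLinearMap.adjoint M) r with hg
  set u : Evec d := xt - xprev with hu
  set v : Evec d := x - xprev with hv
  -- xt is ℓ-cosparse
  have hxtmem : xt ∈ nullSp Om (S xg) := by
    rw [hxt]; exact ((nullSp Om (S xg)).orthogonalProjection xg).2
  have hxtcs : Cosparse Om ℓ xt := by
    unfold Cosparse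
    calc ℓ ≤ (S xg).card := hScard xg
      _ = (↑(S xg) : Set (Fin p)).ncard := (Set.ncard_coe_finset _).symm
      _ ≤ {i : Fin p | Om xt i = 0}.ncard :=
        Set.ncard_le_ncard (fun i hi => hxtmem i hi) (Set.toFinite _)
  have hucs : Cosparse Om (2 * ℓ - p) u := cosparse_sub Om hxtcs hxprev
  have hvcs : Cosparse Om (2 * ℓ - p) v := cosparse_sub Om hx hxprev
  -- inner product identities
  have hadj : ∀ w : Evec d, ⟪M w, r⟫ = ⟪w, g⟫ := by
    intro w
    exact (ContinuousLinearMap.adjoint_inner_right M w r).symm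
  -- objective expansion: for any w, ‖y - M w‖² = ‖r‖² - 2⟪M(w - xprev), r⟫ + ‖M (w - xprev)‖²
  have hexp : ∀ w : Evec d, ‖y - M w‖ ^ 2
      = ‖r‖ ^ 2 - 2 * ⟪M (w - xprev), r⟫ + ‖M (w - xprev)‖ ^ 2 := by
    intro w
    have h1 : y - M w = r - M (w - xprev) := by
      rw [hr, map_sub]; abel
    rw [h1, norm_sub_sq_real, real_inner_comm]
  have hexpt := hexp xt
  have hexpx := hexp x
  -- RIP bounds
  have hripu := (hrip u hucs).2
  have hripv := (hrip v hvcs).1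
  -- step 1: ‖y - M xt‖² - ‖r‖² ≤ (1/μ)‖u‖² - 2⟪u, g⟫
  have step1 : ‖y - M xt‖ ^ 2 - ‖r‖ ^ 2 ≤ (1/μ) * ‖u‖ ^ 2 - 2 * ⟪u, g⟫ := by
    have h2 : (1 + δ) * ‖u‖ ^ 2 ≤ (1/μ) * ‖u‖ ^ 2 :=
      mul_le_mul_of_nonneg_right hμδ (sq_nonneg _)
    have := hadj u
    rw [hexpt]
    rw [← hu] at *
    nlinarith [hripu]
  -- ‖xt - xg‖² = ‖u‖² - 2μ⟪u,g⟫ + μ²‖g‖²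
  have hxtg : ‖xt - xg‖ ^ 2 = ‖u‖ ^ 2 - 2 * μ * ⟪u, g⟫ + μ ^ 2 * ‖g‖ ^ 2 := by
    have h1 : xt - xg = u - μ • g := by
      rw [hxg, hu, hg]; abel
    rw [h1, norm_sub_sq_real, real_inner_smul_right, norm_smul, Real.norm_eq_abs,
      abs_of_pos hμ, mul_pow]
    ring
  -- step 2 : (1/μ)‖u‖² - 2⟪u,g⟫ = (1/μ)‖xt - xg‖² - μ‖g‖²
  have step2 : (1/μ) * ‖u‖ ^ 2 - 2 * ⟪u, g⟫ = (1/μ) * ‖xt - xg‖ ^ 2 - μ * ‖g‖ ^ 2 := by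
    rw [hxtg]; field_simp; ring
  -- near-optimal projection
  have hnear : ‖xt - xg‖ ^ 2 ≤ C * ‖xg - x‖ ^ 2 := by
    have := hSnear xg x hx
    rw [← hxt] at this
    rwa [norm_sub_rev] at this
  -- ‖xg - x‖² = μ²‖g‖² - 2μ⟪v,g⟫ + ‖v‖²
  have hxgx : ‖xg - x‖ ^ 2 = μ ^ 2 * ‖g‖ ^ 2 - 2 * μ * ⟪v, g⟫ + ‖v‖ ^ 2 := by
    have h1 : xg - x = μ • g - v := by
      rw [hxg, hv, hg]; abel
    rw [h1, norm_sub_sq_real, real_inner_smul_left, real_inner_comm g v, norm_smul,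
      Real.norm_eq_abs, abs_of_pos hμ, mul_pow]
    ring
  -- ‖g‖ ≤ ‖M‖ ‖r‖
  have hgnorm : ‖g‖ ^ 2 ≤ ‖M‖ ^ 2 * ‖r‖ ^ 2 := by
    have h1 : ‖g‖ ≤ ‖ContinuousLinearMap.adjoint M‖ * ‖r‖ :=
      (ContinuousLinearMap.adjoint M).le_opNorm r
    have h2 : ‖ContinuousLinearMap.adjoint M‖ = ‖M‖ :=
      ContinuousLinearMap.adjoint.norm_map M
    rw [h2] at h1
    nlinarith [norm_nonneg g, norm_nonneg r, norm_nonneg M]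
  -- RIP lower bound consequence
  have hvMv : C / μ * ‖v‖ ^ 2 ≤ C * (1 / (μ * (1 - δ))) * ‖M v‖ ^ 2 := by
    have hCμ : 0 ≤ C / μ := div_nonneg (by linarith) hμ.le
    have h1 : ‖v‖ ^ 2 ≤ ‖M v‖ ^ 2 / (1 - δ) := by
      rw [le_div_iff₀ h1δ]; nlinarith [hripv]
    calc C / μ * ‖v‖ ^ 2 ≤ C / μ * (‖M v‖ ^ 2 / (1 - δ)) :=
          mul_le_mul_of_nonneg_left h1 hCμ
      _ = C * (1 / (μ * (1 - δ))) * ‖M v‖ ^ 2 := by field_simp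
  -- combine everything
  have key : ‖y - M xt‖ ^ 2 - ‖r‖ ^ 2 ≤
      (C - 1) * μ * ‖g‖ ^ 2 - 2 * C * ⟪v, g⟫ + C / μ * ‖v‖ ^ 2 := by
    have h1 : (1/μ) * ‖xt - xg‖ ^ 2 ≤ (1/μ) * (C * ‖xg - x‖ ^ 2) :=
      mul_le_mul_of_nonneg_left hnear (one_div_nonneg.mpr hμ.le)
    have h2 : (1/μ) * (C * ‖xg - x‖ ^ 2)
        = C * μ * ‖g‖ ^ 2 - 2 * C * ⟪v, g⟫ + C / μ * ‖v‖ ^ 2 := by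
      rw [hxgx]; field_simp
    linarith [step1, step2.le]
  have hinner : ⟪M v, r⟫ = ⟪v, g⟫ := hadj v
  have hMv : ‖y - M x‖ ^ 2 - ‖r‖ ^ 2 = ‖M v‖ ^ 2 - 2 * ⟪v, g⟫ := by
    rw [hexpx, ← hv, hinner]; ring
  have hgg : (C - 1) * μ * ‖g‖ ^ 2 ≤ (C - 1) * μ * (‖M‖ ^ 2 * ‖r‖ ^ 2) := by
    apply mul_le_mul_of_nonneg_left hgnorm
    exact mul_nonneg (by linarith) hμ.le
  have hvrw : M (x - xprev) = M v := by rw [hv]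
  rw [hvrw]
  nlinarith [key, hMv, hgg, hvMv]
end
end

section
/- Consider the problem y = Mx + e with x ℓ-cosparse, and apply ACoSaMP with a = (2ℓ-p)/ℓ. Let w be the temporary estimate minimizing ‖y - Mv‖₂² subject to Ω_{Λ̃^t} v = 0. Then ‖x - w‖₂ ≤ (1/√(1-δ_{4ℓ-3p}²))‖P_{Λ̃^t}(x - w)‖₂ + (√(1+δ_{3ℓ-2p})/(1-δ_{4ℓ-3p}))‖e‖₂, where P_Λ = I - Q_Λ and δ_k denotes the Ω-RIP constant of M for cosparsity k. -/
noncomputable section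

open scoped RealInnerProductSpace

lemma mem_nullSp_cosparse {d p : ℕ} (Om : Evec d →L[ℝ] Evec p) (Λ : Finset (Fin p)) (k : ℕ)
    (hk : k ≤ Λ.card) (v : Evec d) (hv : v ∈ nullSp Om Λ) : Cosparse Om k v := by
  have hsubset : (↑Λ : Set (Fin p)) ⊆ {i : Fin p | Om v i = 0} := fun i hi => hv i hi
  have h := Set.ncard_le_ncard hsubset (Set.toFinite _)
  rw [Set.ncard_coe_finset] at h
  exact le_trans hk h

lemma rip_cross {d m p : ℕ} (M : Evec d →L[ℝ] Evec m) (Om : Evec d →L[ℝ] Evec p) (k : ℕ) (δ : ℝ)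
    (hrip : ORIP M Om k δ) (u v : Evec d)
    (hsum : Cosparse Om k (u + v)) (hdiff : Cosparse Om k (u - v)) :
    ⟪u, v⟫ - ⟪M u, M v⟫ ≤ δ / 2 * (‖u‖ ^ 2 + ‖v‖ ^ 2) := by
  have h1 := (hrip _ hsum).1
  have h2 := (hrip _ hdiff).2
  have e1 : ‖u + v‖ ^ 2 = ‖u‖ ^ 2 + 2 * ⟪u, v⟫ + ‖v‖ ^ 2 := norm_add_sq_real u v
  have e2 : ‖u - v‖ ^ 2 = ‖u‖ ^ 2 - 2 * ⟪u, v⟫ + ‖v‖ ^ 2 := norm_sub_sq_real u v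
  have e3 : ‖M (u + v)‖ ^ 2 = ‖M u‖ ^ 2 + 2 * ⟪M u, M v⟫ + ‖M v‖ ^ 2 := by
    rw [map_add]; exact norm_add_sq_real _ _
  have e4 : ‖M (u - v)‖ ^ 2 = ‖M u‖ ^ 2 - 2 * ⟪M u, M v⟫ + ‖M v‖ ^ 2 := by
    rw [map_sub]; exact norm_sub_sq_real _ _
  have key : δ * ‖u + v‖ ^ 2 + δ * ‖u - v‖ ^ 2 = 2 * δ * (‖u‖ ^ 2 + ‖v‖ ^ 2) := by
    rw [e1, e2]; ring
  linarith


lemma scalar_opt (b c : ℝ) (hb : 0 ≤ b) (key : ∀ t : ℝ, 0 ≤ t ^ 2 * b - 2 * t * c) :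
    c = 0 := by
  have h2 : c ^ 2 ≤ 0 := by
    by_cases hb0 : b = 0
    · have h := key c
      rw [hb0] at h
      nlinarith
    · have hbpos : 0 < b := lt_of_le_of_ne hb (Ne.symm hb0)
      have h := key (c / b)
      have hdiv : (c / b) ^ 2 * b - 2 * (c / b) * c = -(c ^ 2) / b := by
        field_simp
        ring
      rw [hdiv] at h
      have h6 : 0 ≤ (-(c ^ 2) / b) * b := mul_nonneg h hbpos.le
      have h7 : (-(c ^ 2) / b) * b = -(c ^ 2) := by field_simp
      rw [h7] at h6
      linarith
  exact pow_eq_zero_iff two_ne_zero |>.mp (le_antisymm h2 (sq_nonneg _))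

lemma scalar_qbound (t qn ε δ E : ℝ) (ht : 0 < t) (hqn : 0 < qn) (hε : 0 ≤ ε)
    (hδ : 0 ≤ δ) (hE : -(ε * qn) ≤ E)
    (hcross : t * qn * (qn ^ 2 + E) ≤ δ * (t ^ 2 * qn ^ 2)) :
    qn ≤ δ * t + ε := by
  nlinarith [mul_pos ht hqn, mul_pos (mul_pos ht hqn) hqn,
    mul_le_mul_of_nonneg_left hE (mul_nonneg ht.le hqn.le)]

lemma scalar_final (t η qn ε δ s : ℝ) (hη : 0 ≤ η) (hqn : 0 ≤ qn) (hε : 0 ≤ ε)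
    (hδ0 : 0 ≤ δ) (hδ1 : δ < 1) (hs2 : s ^ 2 = 1 - δ ^ 2) (hs : 0 < s)
    (hpy : t ^ 2 = qn ^ 2 + η ^ 2) (hqb : qn ≤ δ * t + ε) :
    t ≤ η / s + ε / (1 - δ) := by
  have h1δ : (0:ℝ) < 1 - δ := by linarith
  have main : t * (s * (1 - δ)) ≤ η * (1 - δ) + ε * s := by
    rcases le_or_gt (t * (1 - δ)) ε with hcase | hcase
    · nlinarith [mul_nonneg hη h1δ.le, mul_le_mul_of_nonneg_left hcase hs.le]
    · have hq2 : qn ^ 2 ≤ (δ * t + ε) ^ 2 := by nlinarith [hqb, hqn]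
      have H : (1 - δ ^ 2) * t ^ 2 ≤ η ^ 2 + 2 * δ * ε * t + ε ^ 2 := by
        nlinarith [hpy, hq2]
      have core : (1 - δ ^ 2) * (t * (1 - δ) - ε) ^ 2 ≤ (η * (1 - δ)) ^ 2 := by
        nlinarith [mul_le_mul_of_nonneg_left H (sq_nonneg (1 - δ)),
          mul_nonneg (mul_nonneg hε h1δ.le) (sub_nonneg.mpr hcase.le), h1δ.le,
          mul_nonneg (mul_nonneg (mul_nonneg hε h1δ.le)
            (sub_nonneg.mpr hcase.le)) h1δ.le]
      have hL2 : (t * s * (1 - δ) - ε * s) ^ 2 ≤ (η * (1 - δ)) ^ 2 := by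
        have step1 : (t * s * (1 - δ) - ε * s) ^ 2
            = s ^ 2 * (t * (1 - δ) - ε) ^ 2 := by ring
        rw [step1, hs2]
        exact core
      nlinarith [hL2, mul_nonneg hη h1δ.le]
  rw [div_add_div _ _ hs.ne' h1δ.ne', le_div_iff₀ (by positivity)]
  nlinarith [main]

set_option maxHeartbeats 1000000 in
/-- Lemma for ACoSaMP (Lemma 6.6): bound on ‖x - w‖ in terms of
‖P_{Λ̃}(x - w)‖ and ‖e‖, where w is the constrained least-squares estimate. -/
theorem stmt10 {d m p ℓ : ℕ} (M : Evec d →L[ℝ] Evec m) (Om : Evec d →L[ℝ] Evec p)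
    (x w : Evec d) (e y : Evec m) (Λx Λt : Finset (Fin p)) (δ₃ δ₄ : ℝ)
    (hy : y = M x + e)
    (hΛx : ∀ i ∈ Λx, Om x i = 0) (hΛxcard : ℓ ≤ Λx.card)
    (hΛtcard : 3 * ℓ - 2 * p ≤ Λt.card)
    (hintcard : 4 * ℓ - 3 * p ≤ (Λx ∩ Λt).card)
    (hw1 : w ∈ nullSp Om Λt)
    (hw2 : ∀ v ∈ nullSp Om Λt, ‖y - M w‖ ≤ ‖y - M v‖)
    (hrip3 : ORIP M Om (3 * ℓ - 2 * p) δ₃)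
    (hrip4 : ORIP M Om (4 * ℓ - 3 * p) δ₄)
    (hδ₃ : 0 ≤ δ₃) (hδ₄0 : 0 ≤ δ₄) (hδ₄1 : δ₄ < 1) :
    ‖x - w‖ ≤ (1 / Real.sqrt (1 - δ₄ ^ 2)) * ‖(x - w) - Qp Om Λt (x - w)‖
      + (Real.sqrt (1 + δ₃) / (1 - δ₄)) * ‖e‖ := by
  by_cases hu0 : x - w = 0
  · rw [hu0, norm_zero]
    apply add_nonneg <;> apply mul_nonneg
    · exact div_nonneg zero_le_one (Real.sqrt_nonneg _)
    · exact norm_nonneg _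
    · exact div_nonneg (Real.sqrt_nonneg _) (by linarith)
    · exact norm_nonneg _
  set u : Evec d := x - w with hu
  set K : Submodule ℝ (Evec d) := nullSp Om Λt with hK
  set q : Evec d := Qp Om Λt u with hqdef
  have hqproj : q = ((K.orthogonalProjection u : K) : Evec d) := rfl
  have hqK : q ∈ K := by rw [hqproj]; exact (K.orthogonalProjection u).2
  have horthm : u - q ∈ Kᗮ := by
    rw [hqproj]; exact K.sub_starProjection_mem_orthogonal u
  have horth : ⟪u - q, q⟫ = 0 := by
    rw [real_inner_comm]; exact horthm q hqK
  -- Pythagoras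
  have hpy : ‖u‖ ^ 2 = ‖q‖ ^ 2 + ‖u - q‖ ^ 2 := by
    have h := norm_add_sq_real q (u - q)
    have hqu : q + (u - q) = u := by abel
    have h2 : ⟪q, u - q⟫ = 0 := by rw [real_inner_comm]; exact horth
    rw [hqu, h2] at h
    linarith
  -- memberships in the smaller null space
  have hsub : Λx ∩ Λt ⊆ Λt := Finset.inter_subset_right
  have hu4 : u ∈ nullSp Om (Λx ∩ Λt) := by
    intro i hi
    have hix : i ∈ Λx := (Finset.mem_inter.mp hi).1
    have hit : i ∈ Λt := (Finset.mem_inter.mp hi).2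
    have hsplit : Om u i = Om x i - Om w i := by rw [hu, map_sub]; rfl
    rw [hsplit, hΛx i hix, hw1 i hit, sub_zero]
  have hq4 : q ∈ nullSp Om (Λx ∩ Λt) := fun i hi => hqK i (hsub hi)
  -- optimality : ⟪y - M w, M q⟫ = 0
  have key : ∀ t : ℝ,
      0 ≤ t ^ 2 * ‖M q‖ ^ 2 - 2 * t * ⟪y - M w, M q⟫ := by
    intro t
    have hmem : w + t • q ∈ K := K.add_mem hw1 (K.smul_mem t hqK)
    have h := hw2 _ hmem
    have hrw : y - M (w + t • q) = (y - M w) - t • M q := by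
      rw [map_add, map_smul]; abel
    have h2 : ‖y - M w‖ ^ 2 ≤ ‖(y - M w) - t • M q‖ ^ 2 := by
      rw [← hrw]
      exact pow_le_pow_left₀ (norm_nonneg _) h 2
    have h3 : ‖(y - M w) - t • M q‖ ^ 2
        = ‖y - M w‖ ^ 2 - 2 * (t * ⟪y - M w, M q⟫) + t ^ 2 * ‖M q‖ ^ 2 := by
      rw [norm_sub_sq_real, real_inner_smul_right, norm_smul,
        Real.norm_eq_abs, mul_pow, sq_abs]
      try ring
    linarith
  have hopt : ⟪y - M w, M q⟫ = 0 := by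
    have h2 : ⟪y - M w, M q⟫ ^ 2 ≤ 0 := by
      by_cases hb0 : ‖M q‖ ^ 2 = 0
      · have h := key ⟪y - M w, M q⟫
        rw [hb0] at h
        nlinarith
      · have hbpos : 0 < ‖M q‖ ^ 2 :=
          lt_of_le_of_ne (by positivity) (Ne.symm hb0)
        have h := key (⟪y - M w, M q⟫ / ‖M q‖ ^ 2)
        have hdiv : (⟪y - M w, M q⟫ / ‖M q‖ ^ 2) ^ 2 * ‖M q‖ ^ 2
            - 2 * (⟪y - M w, M q⟫ / ‖M q‖ ^ 2) * ⟪y - M w, M q⟫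
            = -(⟪y - M w, M q⟫ ^ 2) / ‖M q‖ ^ 2 := by
          field_simp
          ring
        rw [hdiv] at h
        have h6 : 0 ≤ (-(⟪y - M w, M q⟫ ^ 2) / ‖M q‖ ^ 2) * ‖M q‖ ^ 2 :=
          mul_nonneg h hbpos.le
        have h7 : (-(⟪y - M w, M q⟫ ^ 2) / ‖M q‖ ^ 2) * ‖M q‖ ^ 2
            = -(⟪y - M w, M q⟫ ^ 2) := div_mul_cancel₀ _ hbpos.ne'
        rw [h7] at h6
        linarith
    exact pow_eq_zero_iff two_ne_zero |>.mp
      (le_antisymm h2 (sq_nonneg _))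
  have hyMw : y - M w = M u + e := by
    rw [hy, hu, map_sub]; abel
  have hMuq : ⟪M u, M q⟫ = -⟪e, M q⟫ := by
    have h0 : ⟪M u + e, M q⟫ = 0 := by rw [← hyMw]; exact hopt
    rw [inner_add_left] at h0
    linarith
  have hinnerq : ⟪u, q⟫ = ‖q‖ ^ 2 := by
    have h : ⟪u, q⟫ - ⟪q, q⟫ = 0 := by rw [← inner_sub_left]; exact horth
    have h2 : ⟪q, q⟫ = (‖q‖ : ℝ) ^ 2 := real_inner_self_eq_norm_sq q
    linarith
  -- cross (near-orthogonality) bound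
  have hcross : ‖u‖ * ‖q‖ * (⟪u, q⟫ - ⟪M u, M q⟫) ≤ δ₄ * (‖u‖ ^ 2 * ‖q‖ ^ 2) := by
    have hc1 : Cosparse Om (4 * ℓ - 3 * p) (‖q‖ • u + ‖u‖ • q) :=
      mem_nullSp_cosparse Om _ _ hintcard _
        ((nullSp Om (Λx ∩ Λt)).add_mem
          ((nullSp Om (Λx ∩ Λt)).smul_mem _ hu4)
          ((nullSp Om (Λx ∩ Λt)).smul_mem _ hq4))
    have hc2 : Cosparse Om (4 * ℓ - 3 * p) (‖q‖ • u - ‖u‖ • q) :=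
      mem_nullSp_cosparse Om _ _ hintcard _
        ((nullSp Om (Λx ∩ Λt)).sub_mem
          ((nullSp Om (Λx ∩ Λt)).smul_mem _ hu4)
          ((nullSp Om (Λx ∩ Λt)).smul_mem _ hq4))
    have h := rip_cross M Om _ δ₄ hrip4 (‖q‖ • u) (‖u‖ • q) hc1 hc2
    rw [real_inner_smul_left, real_inner_smul_right, map_smul, map_smul,
      real_inner_smul_left, real_inner_smul_right, norm_smul, norm_smul,
      Real.norm_eq_abs, Real.norm_eq_abs, abs_norm, abs_norm] at h
    nlinarith [h]
  -- ‖M q‖ bound via RIP with cosparsity 3ℓ-2p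
  have hq3 : Cosparse Om (3 * ℓ - 2 * p) q := mem_nullSp_cosparse Om Λt _ hΛtcard q hqK
  have hs3 : (0:ℝ) ≤ Real.sqrt (1 + δ₃) := Real.sqrt_nonneg _
  have hMq : ‖M q‖ ≤ Real.sqrt (1 + δ₃) * ‖q‖ := by
    have h := (hrip3 q hq3).2
    have h2 : (Real.sqrt (1 + δ₃) * ‖q‖) ^ 2 = (1 + δ₃) * ‖q‖ ^ 2 := by
      rw [mul_pow, Real.sq_sqrt (by linarith : (0:ℝ) ≤ 1 + δ₃)]
    nlinarith [norm_nonneg (M q), norm_nonneg q, mul_nonneg hs3 (norm_nonneg q)]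
  -- key scalar bound : ‖q‖ ≤ δ₄ ‖u‖ + ε
  have hεnn : 0 ≤ Real.sqrt (1 + δ₃) * ‖e‖ := mul_nonneg hs3 (norm_nonneg e)
  have hupos : 0 < ‖u‖ := norm_pos_iff.mpr hu0
  have hqbound : ‖q‖ ≤ δ₄ * ‖u‖ + Real.sqrt (1 + δ₃) * ‖e‖ := by
    by_cases hq0 : q = 0
    · rw [hq0, norm_zero]
      have : 0 ≤ δ₄ * ‖u‖ := mul_nonneg hδ₄0 hupos.le
      linarith
    · have hqpos : 0 < ‖q‖ := norm_pos_iff.mpr hq0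
      have hein : -(‖e‖ * ‖M q‖) ≤ ⟪e, M q⟫ := by
        have h1 := abs_real_inner_le_norm e (M q)
        have h2 := neg_abs_le (⟪e, M q⟫)
        linarith
      have heq : -(Real.sqrt (1 + δ₃) * ‖e‖ * ‖q‖) ≤ ⟪e, M q⟫ := by
        have h1 : ‖e‖ * ‖M q‖ ≤ ‖e‖ * (Real.sqrt (1 + δ₃) * ‖q‖) :=
          mul_le_mul_of_nonneg_left hMq (norm_nonneg e)
        nlinarith
      rw [hinnerq, hMuq] at hcross
      refine scalar_qbound (‖u‖) (‖q‖) _ δ₄ (⟪e, M q⟫) hupos hqpos hεnn hδ₄0 heq ?_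
      nlinarith [hcross]
  -- final algebra
  have h1δ : (0:ℝ) < 1 - δ₄ := by linarith
  have hδsq : (0:ℝ) < 1 - δ₄ ^ 2 := by nlinarith
  have hs2 : Real.sqrt (1 - δ₄ ^ 2) ^ 2 = 1 - δ₄ ^ 2 := Real.sq_sqrt hδsq.le
  have hspos : 0 < Real.sqrt (1 - δ₄ ^ 2) := Real.sqrt_pos.mpr hδsq
  have hfinal : ‖u‖ ≤ ‖u - q‖ / Real.sqrt (1 - δ₄ ^ 2)
      + (Real.sqrt (1 + δ₃) * ‖e‖) / (1 - δ₄) :=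
    scalar_final (‖u‖) (‖u - q‖) (‖q‖) (Real.sqrt (1 + δ₃) * ‖e‖) δ₄
      (Real.sqrt (1 - δ₄ ^ 2)) (norm_nonneg _) (norm_nonneg _) hεnn hδ₄0 hδ₄1
      hs2 hspos hpy hqbound
  calc ‖u‖ ≤ ‖u - q‖ / Real.sqrt (1 - δ₄ ^ 2)
      + (Real.sqrt (1 + δ₃) * ‖e‖) / (1 - δ₄) := hfinal
    _ = (1 / Real.sqrt (1 - δ₄ ^ 2)) * ‖u - q‖
      + (Real.sqrt (1 + δ₃) / (1 - δ₄)) * ‖e‖ := by ring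
end
end
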